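/- Let Q be an NQPR in dimension d ≥ 2. Then for all indices j, k: (1/2)·[λ_max(Q_j)·(‖Q_k‖₁ − 1) − λ_min(Q_j)·(‖Q_k‖₁ + 1)] ≤ ((d−1)/(√2·d))·√((d+1)(d² + d + 2)) − 1/d. Consequently the channel negativity N_C(Q) = max_{j,k} (1/2)·[λ_max(Q_j)·(‖Q_k‖₁ − 1) − λ_min(Q_j)·(‖Q_k‖₁ + 1)] is bounded above by ((d−1)/(√2·d))·√((d+1)(d² + d + 2)) − 1/d. -/

import Mathlib

open Matrix in
lemma herm_trace_eq {n : Type*} [Fintype n] [DecidableEq n] {A : Matrix n n ℂ}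
    (hA : A.IsHermitian) : A.trace = ∑ i, (hA.eigenvalues i : ℂ) := by
  conv_lhs => rw [hA.spectral_theorem, Unitary.conjStarAlgAut_apply]
  rw [Matrix.trace_mul_cycle, Unitary.coe_star_mul_self, Matrix.one_mul, Matrix.trace_diagonal]
  simp

open Matrix in
lemma herm_trace_sq_eq {n : Type*} [Fintype n] [DecidableEq n] {A : Matrix n n ℂ}
    (hA : A.IsHermitian) : (A * A).trace = ∑ i, (hA.eigenvalues i : ℂ) ^ 2 := by
  set U := hA.eigenvectorUnitary with hU
  set D := diagonal (RCLike.ofReal ∘ hA.eigenvalues : n → ℂ) with hD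
  have h2 : (A * A).trace = (D * D).trace := by
    conv_lhs => rw [hA.spectral_theorem, Unitary.conjStarAlgAut_apply]
    simp only [Matrix.mul_assoc]
    rw [← Matrix.mul_assoc (star (U : Matrix n n ℂ)) (U : Matrix n n ℂ),
      Unitary.coe_star_mul_self, Matrix.one_mul,
      ← Matrix.mul_assoc, ← Matrix.mul_assoc, Matrix.trace_mul_cycle,
      ← Matrix.mul_assoc, Unitary.coe_star_mul_self, Matrix.one_mul]
  rw [h2, hD, Matrix.diagonal_mul_diagonal, Matrix.trace_diagonal]
  simp [pow_two]
set_option maxHeartbeats 1000000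

lemma quad_cert (t x c α : ℝ) : 2 * t * (c * x) ≤ 2 * t * ((t/2) * x^2 + α * x) + (α - c)^2 := by
  nlinarith [sq_nonneg (t * x + (α - c))]

lemma key_ineq (d : ℕ) (hd : 2 ≤ d) (μ ν : Fin d → ℝ)
    (hμ1 : ∑ i, μ i = 1) (hμ2 : ∑ i, μ i ^ 2 = d) (hν2 : ∑ i, ν i ^ 2 = d) :
    (1 / 2 : ℝ) * ((⨆ i, μ i) * ((∑ i, |ν i|) - 1) - (⨅ i, μ i) * ((∑ i, |ν i|) + 1)) ≤
      (((d : ℝ) - 1) / (Real.sqrt 2 * d)) * Real.sqrt (((d : ℝ) + 1) * ((d : ℝ) ^ 2 + d + 2))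
        - 1 / d := by
  have hd0 : (0:ℝ) < d := by positivity
  have hd2 : (2:ℝ) ≤ d := by exact_mod_cast hd
  haveI : Nonempty (Fin d) := ⟨⟨0, by omega⟩⟩
  obtain ⟨i0, hi0⟩ := Finite.exists_max μ
  obtain ⟨i1, hi1⟩ := Finite.exists_min μ
  have hAeq : (⨆ i, μ i) = μ i0 :=
    le_antisymm (ciSup_le hi0) (le_ciSup (Set.Finite.bddAbove (Set.finite_range μ)) i0)
  have hBeq : (⨅ i, μ i) = μ i1 :=
    le_antisymm (ciInf_le (Set.Finite.bddBelow (Set.finite_range μ)) i1) (le_ciInf hi1)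
  set A := μ i0 with hAdef
  set B := μ i1 with hBdef
  have hAB : B ≤ A := hi1 i0
  set N := ∑ i, |ν i| with hN
  have hN0 : 0 ≤ N := Finset.sum_nonneg fun i _ => abs_nonneg _
  have hNsq : N ^ 2 ≤ (d:ℝ) * (d:ℝ) := by
    have h := sq_sum_le_card_mul_sum_sq (s := Finset.univ) (f := fun i => |ν i|) (α := ℝ)
    simp only [Finset.card_univ, Fintype.card_fin, sq_abs] at h
    calc N ^ 2 ≤ (d:ℝ) * ∑ i, ν i ^ 2 := by exact_mod_cast h
    _ = (d:ℝ) * d := by rw [hν2]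
  have hNd : N ≤ (d:ℝ) := by nlinarith
  have hne : i0 ≠ i1 := by
    intro h
    have hall : ∀ i, μ i = A := fun i =>
      le_antisymm (hi0 i) (by simpa [hAdef, h] using hi1 i)
    have e1 : ∑ i, μ i = ∑ _i : Fin d, A := Finset.sum_congr rfl fun i _ => hall i
    have e2 : ∑ i, μ i ^ 2 = ∑ _i : Fin d, A ^ 2 :=
      Finset.sum_congr rfl fun i _ => by rw [hall i]
    rw [e1, Finset.sum_const, Finset.card_univ, Fintype.card_fin, nsmul_eq_mul] at hμ1
    rw [e2, Finset.sum_const, Finset.card_univ, Fintype.card_fin, nsmul_eq_mul] at hμ2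
    nlinarith
  -- certificate
  set t := Real.sqrt (((d:ℝ)^2 + d + 2) / (2 * ((d:ℝ) + 1))) with hT
  have ht0 : 0 < t := Real.sqrt_pos.mpr (by positivity)
  have ht2 : 2 * ((d:ℝ) + 1) * t ^ 2 = (d:ℝ)^2 + d + 2 := by
    rw [hT, Real.sq_sqrt (by positivity)]; field_simp
  set α := -(1 + t) / d with hα
  set a := ((d:ℝ) - 1) / 2 with ha
  set b := ((d:ℝ) + 1) / 2 with hb
  set g : Fin d → ℝ := fun i => 2 * t * ((t/2) * μ i ^ 2 + α * μ i) with hg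
  have h0 : 2 * t * (a * A) ≤ g i0 + (α - a)^2 := quad_cert t (μ i0) a α
  have h1 : -(2 * t * (b * B)) ≤ g i1 + (α + b)^2 := by
    have := quad_cert t (μ i1) (-b) α
    simp only [hg]
    nlinarith [this]
  have hrest : ∀ i ∈ (Finset.univ.erase i1).erase i0, -(α^2) ≤ g i := by
    intro i _
    have := quad_cert t (μ i) 0 α
    simp only [hg]
    nlinarith [this]
  have hgsum : ∑ i, g i = 2 * t * ((t/2) * d + α) := by
    have e : ∑ i, ((t/2) * μ i ^ 2 + α * μ i) = (t/2) * d + α := by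
      rw [Finset.sum_add_distrib, ← Finset.mul_sum, ← Finset.mul_sum, hμ1, hμ2]; ring
    simp only [hg]
    rw [← Finset.mul_sum, e]
  -- split the sum
  have hmem1 : i1 ∈ (Finset.univ : Finset (Fin d)) := Finset.mem_univ _
  have hmem0 : i0 ∈ Finset.univ.erase i1 := Finset.mem_erase.mpr ⟨hne, Finset.mem_univ _⟩
  have hsplit : ∑ i, g i = g i1 + (g i0 + ∑ i ∈ (Finset.univ.erase i1).erase i0, g i) := by
    rw [← Finset.add_sum_erase _ g hmem1, ← Finset.add_sum_erase _ g hmem0]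
  have hcard : ((Finset.univ.erase i1).erase i0).card = d - 2 := by
    rw [Finset.card_erase_of_mem hmem0, Finset.card_erase_of_mem hmem1,
      Finset.card_univ, Fintype.card_fin]
    omega
  have hrestsum : -(((d:ℝ) - 2) * α^2) ≤ ∑ i ∈ (Finset.univ.erase i1).erase i0, g i := by
    calc -(((d:ℝ) - 2) * α^2) = ∑ _i ∈ (Finset.univ.erase i1).erase i0, -(α^2) := by
          rw [Finset.sum_const, hcard, nsmul_eq_mul]
          have : ((d - 2 : ℕ) : ℝ) = (d:ℝ) - 2 := by
            push_cast [Nat.cast_sub hd]; ring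
          rw [this]; ring
    _ ≤ _ := Finset.sum_le_sum hrest
  -- main certificate inequality
  have hmain : 2 * t * (a * A - b * B) ≤
      2 * t * ((t/2) * d + α) + ((α - a)^2 + (α + b)^2 + ((d:ℝ) - 2) * α^2) := by
    have := hsplit
    rw [hgsum] at this
    nlinarith [h0, h1, hrestsum]
  -- the identity
  have hident : 2 * t * ((t/2) * d + α) + ((α - a)^2 + (α + b)^2 + ((d:ℝ) - 2) * α^2)
      = 2 * t * ((((d:ℝ)^2 - 1) * t - 1) / d) := by
    rw [hα, ha, hb]
    field_simp
    linear_combination (2*(d:ℝ) - 2*(d:ℝ)^2) * ht2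
  have hfinal : a * A - b * B ≤ (((d:ℝ)^2 - 1) * t - 1) / d := by
    rw [hident] at hmain
    have h2t : 0 < 2 * t := by linarith
    exact le_of_mul_le_mul_left hmain h2t
  -- rewrite the RHS of the goal
  have hsqrt : Real.sqrt (((d:ℝ) + 1) * ((d:ℝ)^2 + d + 2)) = Real.sqrt 2 * ((d:ℝ) + 1) * t := by
    rw [show ((d:ℝ) + 1) * ((d:ℝ)^2 + d + 2) = (Real.sqrt 2 * ((d:ℝ) + 1) * t)^2 by
      rw [mul_pow, mul_pow, Real.sq_sqrt (by norm_num : (0:ℝ) ≤ 2)]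
      rw [hT, Real.sq_sqrt (by positivity)]
      field_simp]
    rw [Real.sqrt_sq (by positivity)]
  have hs2 : Real.sqrt 2 ≠ 0 := by positivity
  have hrhs : (((d : ℝ) - 1) / (Real.sqrt 2 * d)) * Real.sqrt (((d : ℝ) + 1) * ((d : ℝ)^2 + d + 2))
      - 1 / d = (((d:ℝ)^2 - 1) * t - 1) / d := by
    rw [hsqrt]; field_simp; ring
  rw [ha, hb] at hfinal
  rw [hAeq, hBeq, hrhs]
  -- conclude
  nlinarith [hfinal, mul_nonneg (sub_nonneg.mpr hNd) (sub_nonneg.mpr hAB)]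



/-- For an NQPR `Q` in dimension `d ≥ 2`, for all `j, k` one has
`(1/2)[λ_max(Q j)(‖Q k‖₁ − 1) − λ_min(Q j)(‖Q k‖₁ + 1)] ≤ ((d−1)/(√2·d))√((d+1)(d²+d+2)) − 1/d`,
and consequently the channel negativity `N_C(Q)` (the maximum of the left-hand side over `j, k`)
is bounded above by the same quantity. -/
theorem stmt_15 (d : ℕ) (hd : 2 ≤ d)
    (Q : Fin (d ^ 2) → Matrix (Fin d) (Fin d) ℂ)
    (hherm : ∀ j, (Q j).IsHermitian)
    (htr : ∀ j, (Q j).trace = 1)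
    (hpair : ∀ j k, (Q j * Q k).trace = if j = k then (d : ℂ) else 0)
    (hsum : ∑ j, Q j = (d : ℂ) • (1 : Matrix (Fin d) (Fin d) ℂ)) :
    (∀ j k, (1 / 2 : ℝ) *
        ((⨆ i, (hherm j).eigenvalues i) * ((∑ i, |(hherm k).eigenvalues i|) - 1)
          - (⨅ i, (hherm j).eigenvalues i) * ((∑ i, |(hherm k).eigenvalues i|) + 1)) ≤
      (((d : ℝ) - 1) / (Real.sqrt 2 * d)) *
        Real.sqrt (((d : ℝ) + 1) * ((d : ℝ) ^ 2 + d + 2)) - 1 / d) ∧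
    (⨆ j, ⨆ k, (1 / 2 : ℝ) *
        ((⨆ i, (hherm j).eigenvalues i) * ((∑ i, |(hherm k).eigenvalues i|) - 1)
          - (⨅ i, (hherm j).eigenvalues i) * ((∑ i, |(hherm k).eigenvalues i|) + 1))) ≤
      (((d : ℝ) - 1) / (Real.sqrt 2 * d)) *
        Real.sqrt (((d : ℝ) + 1) * ((d : ℝ) ^ 2 + d + 2)) - 1 / d := by
  have hsum1 : ∀ j, ∑ i, (hherm j).eigenvalues i = 1 := by
    intro j
    have h := htr j
    rw [herm_trace_eq (hherm j)] at h
    exact_mod_cast h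
  have hsum2 : ∀ j, ∑ i, (hherm j).eigenvalues i ^ 2 = (d : ℝ) := by
    intro j
    have h := hpair j j
    rw [if_pos rfl, herm_trace_sq_eq (hherm j)] at h
    exact_mod_cast h
  have part1 : ∀ j k, (1 / 2 : ℝ) *
        ((⨆ i, (hherm j).eigenvalues i) * ((∑ i, |(hherm k).eigenvalues i|) - 1)
          - (⨅ i, (hherm j).eigenvalues i) * ((∑ i, |(hherm k).eigenvalues i|) + 1)) ≤
      (((d : ℝ) - 1) / (Real.sqrt 2 * d)) *
        Real.sqrt (((d : ℝ) + 1) * ((d : ℝ) ^ 2 + d + 2)) - 1 / d := by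
    intro j k
    exact key_ineq d hd _ _ (hsum1 j) (hsum2 j) (hsum2 k)
  refine ⟨part1, ?_⟩
  haveI : Nonempty (Fin (d ^ 2)) := ⟨⟨0, by positivity⟩⟩
  exact ciSup_le fun j => ciSup_le fun k => part1 j k
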